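/- Let $X$ be an irreducible ergodic Markov chain on finite $S$ with stationary distribution $\pi$, started with $X_0 \sim \pi$, and let $W_j = \inf\{t \ge 0 : X_t = j\}$. Suppose $j$ satisfies $\pi_y \mathbb{P}(X_t = j) \le \pi_j \mathbb{P}(X_t = y)$ for all $t \ge 0$ and $y \in S$ when $X_0 \sim \pi^{(j)}$, and let $T^{(j)}$ satisfy $\mathbb{P}(T^{(j)} > t) = (P^t(j,j)-\pi_j)/(1-\pi_j)$. Then $W_j$ is equal in distribution to $T^{(j)}_1 + \cdots + T^{(j)}_N$, where $N \sim \mathrm{Geom}(\pi_j)$ (supported on $\{0,1,2,\ldots\}$) and $T^{(j)}_1, T^{(j)}_2, \ldots$ are IID copies of $T^{(j)}$ independent of $N$. -/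

import Mathlib

open MeasureTheory Finset

/-- A (homogeneous) Markov chain with one-step transition matrix `P`. -/
def IsMarkovChain {Ω E : Type*} [MeasurableSpace Ω] (μ : Measure Ω)
    (X : ℕ → Ω → E) (P : E → E → ℝ) : Prop :=
  ∀ (t : ℕ) (h : ℕ → E) (y : E),
    (μ {ω | X (t + 1) ω = y ∧ ∀ i ≤ t, X i ω = h i}).toReal
      = P (h t) y * (μ {ω | ∀ i ≤ t, X i ω = h i}).toReal

/-- `k`-fold convolution power of a distribution `f` on `ℕ`:
the law of the sum of `k` IID copies. -/
noncomputable def convPow (f : ℕ → ℝ) : ℕ → ℕ → ℝ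
  | 0, n => if n = 0 then 1 else 0
  | (k + 1), n => ∑ i ∈ Finset.range (n + 1), f i * convPow f k (n - i)

/-- The law of a geometric (parameter `p`, supported on `{0,1,2,...}`) sum of IID
random variables with law `f` on `ℕ`. -/
noncomputable def geomSumPMF (p : ℝ) (f : ℕ → ℝ) (n : ℕ) : ℝ :=
  ∑' k : ℕ, p * (1 - p) ^ k * convPow f k n

/-- The probability mass function on `ℕ` of a random variable with tail function `q`,
`q t = ℙ(T > t)`. -/
noncomputable def tailToPMF (q : ℕ → ℝ) : ℕ → ℝ
  | 0 => 1 - q 0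
  | (n + 1) => q n - q (n + 1)

section Aux

variable {S : Type*} [Fintype S] [DecidableEq S]

/-- weight of a finite path -/
noncomputable def Mw (P : Matrix S S ℝ) (π : S → ℝ) : (t : ℕ) → (Fin (t + 1) → S) → ℝ
  | 0, g => π (g 0)
  | (t + 1), g => Mw P π t (Fin.init g) * P (g (Fin.castSucc (Fin.last t))) (g (Fin.last (t + 1)))

lemma Mw_snoc (P : Matrix S S ℝ) (π : S → ℝ) (t : ℕ) (h : Fin (t + 1) → S) (y : S) :
    Mw P π (t + 1) (Fin.snoc h y) = Mw P π t h * P (h (Fin.last t)) y := by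
  simp [Mw, Fin.init_snoc, Fin.snoc_castSucc, Fin.snoc_last]

lemma Mw_nonneg {P : Matrix S S ℝ} {π : S → ℝ} (hP0 : ∀ i k, 0 ≤ P i k)
    (hπ0 : ∀ s, 0 ≤ π s) : ∀ t g, 0 ≤ Mw P π t g := by
  intro t
  induction t with
  | zero => intro g; exact hπ0 _
  | succ t ih => intro g; exact mul_nonneg (ih _) (hP0 _ _)

lemma sum_snoc {M : Type*} [AddCommMonoid M] (t : ℕ) (F : (Fin (t + 2) → S) → M) :
    ∑ g : Fin (t + 2) → S, F g = ∑ h : Fin (t + 1) → S, ∑ y : S, F (Fin.snoc h y) := by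
  rw [← (Fin.snocEquiv (fun _ => S)).sum_comp F]
  rw [Fintype.sum_prod_type]
  rw [Finset.sum_comm]
  rfl

end Aux

section Aux2
set_option linter.unusedSectionVars false
variable {S : Type*} [Fintype S] [DecidableEq S]

lemma ext_sum (P : Matrix S S ℝ) (π : S → ℝ) (t : ℕ) :
    ∀ n (htn : t ≤ n), ∀ (A : Finset (Fin (t + 1) → S)) (z : S),
    (∑ g : Fin (n + 1) → S,
      if (fun i : Fin (t + 1) => g (Fin.castLE (by omega) i)) ∈ A ∧ g (Fin.last n) = z
        then Mw P π n g else 0)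
    = ∑ h ∈ A, (P ^ (n - t)) (h (Fin.last t)) z * Mw P π t h := by
  refine Nat.le_induction ?_ ?_
  · intro A z
    have hid : ∀ g : Fin (t + 1) → S,
        (fun i : Fin (t + 1) => g (Fin.castLE (by omega) i)) = g := fun g => rfl
    simp only [hid, Nat.sub_self, pow_zero, Matrix.one_apply, ite_mul, one_mul, zero_mul]
    rw [← Finset.sum_filter, ← Finset.sum_filter]
    congr 1
    ext g
    simp [and_comm]
  · intro n htn IH A z
    have hsn : t + 1 ≤ n + 1 := by omega
    have hcast : ∀ (g : Fin (n + 1) → S) (y : S) (i : Fin (t + 1)),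
        (Fin.snoc g y : Fin (n + 2) → S) (Fin.castLE (by omega) i)
          = g (Fin.castLE hsn i) := by
      intro g y i
      have : (Fin.castLE (by omega : t + 1 ≤ n + 2) i)
          = Fin.castSucc (Fin.castLE hsn i) := rfl
      rw [this, Fin.snoc_castSucc]
    rw [sum_snoc]
    have step1 : ∀ h' : Fin (n + 1) → S,
        (∑ y : S, if (fun i : Fin (t + 1) => (Fin.snoc h' y : Fin (n + 2) → S)
              (Fin.castLE (by omega) i)) ∈ A ∧ (Fin.snoc h' y : Fin (n + 2) → S) (Fin.last (n+1)) = z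
            then Mw P π (n + 1) (Fin.snoc h' y) else 0)
        = ∑ w : S, (if (fun i : Fin (t + 1) => h' (Fin.castLE hsn i)) ∈ A ∧ h' (Fin.last n) = w
            then Mw P π n h' else 0) * P w z := by
      intro h'
      have hrw : ∀ y : S,
          (if (fun i : Fin (t + 1) => (Fin.snoc h' y : Fin (n + 2) → S)
              (Fin.castLE (by omega) i)) ∈ A ∧ (Fin.snoc h' y : Fin (n + 2) → S) (Fin.last (n+1)) = z
            then Mw P π (n + 1) (Fin.snoc h' y) else 0)
          = if ((fun i : Fin (t + 1) => h' (Fin.castLE hsn i)) ∈ A ∧ y = z)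
              then Mw P π n h' * P (h' (Fin.last n)) y else 0 := by
        intro y
        rw [Mw_snoc]
        congr 1
        · simp only [hcast, Fin.snoc_last]
      simp only [hrw]
      by_cases hp : (fun i : Fin (t + 1) => h' (Fin.castLE hsn i)) ∈ A
      · simp only [hp, true_and, ite_mul, zero_mul]
        rw [Finset.sum_ite_eq' Finset.univ z (fun y => Mw P π n h' * P (h' (Fin.last n)) y)]
        rw [Finset.sum_ite_eq Finset.univ (h' (Fin.last n)) (fun w => Mw P π n h' * P w z)]
        simp
      · simp [hp]
    rw [Finset.sum_congr rfl (fun h' _ => step1 h')]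
    rw [Finset.sum_comm]
    have step2 : ∀ w : S,
        (∑ h' : Fin (n + 1) → S,
          (if (fun i : Fin (t + 1) => h' (Fin.castLE hsn i)) ∈ A ∧ h' (Fin.last n) = w
            then Mw P π n h' else 0) * P w z)
        = (∑ h ∈ A, (P ^ (n - t)) (h (Fin.last t)) w * Mw P π t h) * P w z := by
      intro w
      rw [← Finset.sum_mul, IH A w]
    rw [Finset.sum_congr rfl (fun w _ => step2 w)]
    simp only [Finset.sum_mul]
    rw [Finset.sum_comm]
    refine Finset.sum_congr rfl (fun h _ => ?_)
    have hnt : n + 1 - t = (n - t) + 1 := by omega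
    rw [hnt, pow_succ, Matrix.mul_apply, Finset.sum_mul]
    refine Finset.sum_congr rfl (fun w _ => ?_)
    ring

lemma vecMul_pow {P : Matrix S S ℝ} {π : S → ℝ} (hstat : Matrix.vecMul π P = π) :
    ∀ r, Matrix.vecMul π (P ^ r) = π := by
  intro r
  induction r with
  | zero => simp [Matrix.vecMul_one]
  | succ r ih => rw [pow_succ, ← Matrix.vecMul_vecMul, ih, hstat]

lemma sum_funUnique {M : Type*} [AddCommMonoid M] (F : (Fin 1 → S) → M) :
    ∑ h : Fin 1 → S, F h = ∑ s : S, F (fun _ => s) := by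
  rw [← (Equiv.funUnique (Fin 1) S).symm.sum_comp F]
  rfl

lemma marginal_sum {P : Matrix S S ℝ} {π : S → ℝ} (hstat : Matrix.vecMul π P = π)
    (n : ℕ) (z : S) :
    (∑ g : Fin (n + 1) → S, if g (Fin.last n) = z then Mw P π n g else 0) = π z := by
  have h := ext_sum P π 0 n (Nat.zero_le n) Finset.univ z
  simp only [Finset.mem_univ, true_and, Nat.sub_zero] at h
  rw [h, sum_funUnique (fun h : Fin 1 → S => (P ^ n) (h (Fin.last 0)) z * Mw P π 0 h)]
  have : ∀ s : S, (P ^ n) s z * π s = π s * (P ^ n) s z := fun s => mul_comm _ _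
  calc ∑ s : S, (P ^ n) s z * Mw P π 0 (fun _ => s)
      = ∑ s : S, π s * (P ^ n) s z := by
        refine Finset.sum_congr rfl (fun s _ => ?_)
        simp [Mw, mul_comm]
    _ = Matrix.vecMul π (P ^ n) z := rfl
    _ = π z := by rw [vecMul_pow hstat]

lemma total_sum {P : Matrix S S ℝ} {π : S → ℝ} (hstat : Matrix.vecMul π P = π)
    (hπsum : ∑ s, π s = 1) (n : ℕ) :
    ∑ g : Fin (n + 1) → S, Mw P π n g = 1 := by
  have : ∀ g : Fin (n + 1) → S, Mw P π n g
      = ∑ z : S, if g (Fin.last n) = z then Mw P π n g else 0 := by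
    intro g
    rw [Finset.sum_ite_eq Finset.univ (g (Fin.last n)) (fun _ => Mw P π n g)]
    simp
  rw [Finset.sum_congr rfl (fun g _ => this g), Finset.sum_comm]
  rw [Finset.sum_congr rfl (fun z _ => marginal_sum hstat n z), hπsum]

lemma pow_entry_nonneg {P : Matrix S S ℝ} (hP0 : ∀ i k, 0 ≤ P i k) :
    ∀ r i k, 0 ≤ (P ^ r) i k := by
  intro r
  induction r with
  | zero =>
    intro i k
    rw [pow_zero, Matrix.one_apply]
    split <;> norm_num
  | succ r ih =>
    intro i k
    rw [pow_succ, Matrix.mul_apply]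
    exact Finset.sum_nonneg (fun w _ => mul_nonneg (ih i w) (hP0 w k))

lemma pow_row_sum {P : Matrix S S ℝ} (hP1 : ∀ i, ∑ k, P i k = 1) :
    ∀ r i, ∑ k, (P ^ r) i k = 1 := by
  intro r
  induction r with
  | zero =>
    intro i
    simp [Matrix.one_apply]
  | succ r ih =>
    intro i
    rw [pow_succ]
    simp only [Matrix.mul_apply]
    rw [Finset.sum_comm]
    calc ∑ w : S, ∑ k : S, (P ^ r) i w * P w k
        = ∑ w : S, (P ^ r) i w * ∑ k : S, P w k := by
          refine Finset.sum_congr rfl (fun w _ => ?_)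
          rw [Finset.mul_sum]
      _ = 1 := by simp only [hP1, mul_one]; exact ih i

end Aux2

section Meas
set_option linter.unusedSectionVars false
variable {S : Type*} [Fintype S] [DecidableEq S]
variable {Ω : Type*} [MeasurableSpace Ω] (μ : Measure Ω) [IsProbabilityMeasure μ]
variable (X : ℕ → Ω → S) (P : Matrix S S ℝ) (π : S → ℝ)

lemma meas_cyl (hchain : IsMarkovChain μ X (fun a b => P a b))
    (hinit : ∀ s, (μ {ω | X 0 ω = s}).toReal = π s) :
    ∀ (t : ℕ) (g : Fin (t + 1) → S),
      (μ {ω | ∀ i : Fin (t + 1), X (i : ℕ) ω = g i}).toReal = Mw P π t g := by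
  intro t
  induction t with
  | zero =>
    intro g
    have hset : {ω | ∀ i : Fin 1, X (i : ℕ) ω = g i} = {ω | X 0 ω = g 0} := by
      ext ω
      constructor
      · intro h; exact h 0
      · intro h i
        have : i = 0 := Subsingleton.elim i 0
        rw [this]; exact h
    rw [hset, hinit]
    rfl
  | succ t ih =>
    intro g
    set hf : ℕ → S := fun i => g ⟨min i (t + 1), by omega⟩ with hhf
    have key := hchain t hf (g (Fin.last (t + 1)))
    have hs1 : {ω | (fun t => X t) (t + 1) ω = g (Fin.last (t + 1)) ∧ ∀ i ≤ t, (fun t => X t) i ω = hf i}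
        = {ω | ∀ i : Fin (t + 2), X (i : ℕ) ω = g i} := by
      ext ω
      simp only [Set.mem_setOf_eq]
      constructor
      · rintro ⟨h1, h2⟩ i
        by_cases hi : (i : ℕ) ≤ t
        · have := h2 (i : ℕ) hi
          have hmin : (⟨min (i : ℕ) (t + 1), by omega⟩ : Fin (t + 2)) = i := by
            apply Fin.ext; simp; omega
          exact this.trans (congrArg g hmin)
        · have hieq : i = Fin.last (t + 1) := by
            apply Fin.ext; simp [Fin.val_last]; omega
          rw [hieq]; exact h1
      · intro h
        refine ⟨h (Fin.last (t + 1)), fun i hi => ?_⟩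
        have := h ⟨i, by omega⟩
        simpa [hhf, Nat.min_eq_left (by omega : i ≤ t + 1)] using this
    have hs2 : {ω | ∀ i ≤ t, (fun t => X t) i ω = hf i}
        = {ω | ∀ i : Fin (t + 1), X (i : ℕ) ω = Fin.init g i} := by
      ext ω
      simp only [Set.mem_setOf_eq]
      constructor
      · intro h i
        have := h (i : ℕ) (by omega)
        refine this.trans (congrArg g (Fin.ext ?_))
        show min (i : ℕ) (t + 1) = (i : ℕ)
        omega
      · intro h i hi
        have := h ⟨i, by omega⟩
        simpa [hhf, Fin.init, Nat.min_eq_left (by omega : i ≤ t + 1), Fin.castSucc] using this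
    rw [hs1, hs2] at key
    have hft : hf t = g (Fin.castSucc (Fin.last t)) := by
      apply congrArg g
      apply Fin.ext
      simp
    rw [key, ih (Fin.init g), hft]
    show _ = Mw P π (t+1) g
    rw [show Mw P π (t+1) g = Mw P π t (Fin.init g) * P (g (Fin.castSucc (Fin.last t))) (g (Fin.last (t + 1))) from rfl]
    ring

lemma meas_event (hP0 : ∀ i k, 0 ≤ P i k) (hπ0 : ∀ s, 0 ≤ π s)
    (hstat : Matrix.vecMul π P = π) (hπsum : ∑ s, π s = 1)
    (hchain : IsMarkovChain μ X (fun a b => P a b))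
    (hinit : ∀ s, (μ {ω | X 0 ω = s}).toReal = π s)
    (t : ℕ) (A : Finset (Fin (t + 1) → S)) :
    (μ {ω | (fun i : Fin (t + 1) => X (i : ℕ) ω) ∈ A}).toReal = ∑ g ∈ A, Mw P π t g := by
  have hcyl : ∀ g : Fin (t + 1) → S,
      μ {ω | ∀ i : Fin (t + 1), X (i : ℕ) ω = g i} = ENNReal.ofReal (Mw P π t g) := by
    intro g
    rw [← meas_cyl μ X P π hchain hinit t g]
    exact (ENNReal.ofReal_toReal (measure_ne_top μ _)).symm
  have hEv : ∀ B : Finset (Fin (t + 1) → S),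
      {ω | (fun i : Fin (t + 1) => X (i : ℕ) ω) ∈ B}
        = ⋃ g ∈ B, {ω | ∀ i : Fin (t + 1), X (i : ℕ) ω = g i} := by
    intro B
    ext ω
    simp only [Set.mem_setOf_eq, Set.mem_iUnion]
    constructor
    · intro h
      exact ⟨fun i => X (i : ℕ) ω, h, fun i => rfl⟩
    · rintro ⟨g, hg, hgω⟩
      have : (fun i : Fin (t + 1) => X (i : ℕ) ω) = g := funext hgω
      rwa [this]
  have hub : ∀ B : Finset (Fin (t + 1) → S),
      μ {ω | (fun i : Fin (t + 1) => X (i : ℕ) ω) ∈ B} ≤ ENNReal.ofReal (∑ g ∈ B, Mw P π t g) := by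
    intro B
    rw [hEv B]
    refine le_trans (measure_biUnion_finset_le B _) ?_
    rw [ENNReal.ofReal_sum_of_nonneg (fun g _ => Mw_nonneg hP0 hπ0 t g)]
    exact Finset.sum_le_sum (fun g _ => le_of_eq (hcyl g))
  set sA := ∑ g ∈ A, Mw P π t g with hsA
  set sC := ∑ g ∈ Aᶜ, Mw P π t g with hsC
  have hsplit : sA + sC = 1 := by
    rw [hsA, hsC, Finset.sum_add_sum_compl]
    exact total_sum hstat hπsum t
  have hA0 : 0 ≤ sA := Finset.sum_nonneg (fun g _ => Mw_nonneg hP0 hπ0 t g)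
  have hC0 : 0 ≤ sC := Finset.sum_nonneg (fun g _ => Mw_nonneg hP0 hπ0 t g)
  have hle : (μ {ω | (fun i : Fin (t + 1) => X (i : ℕ) ω) ∈ A}).toReal ≤ sA :=
    ENNReal.toReal_le_of_le_ofReal hA0 (hub A)
  have hleC : (μ {ω | (fun i : Fin (t + 1) => X (i : ℕ) ω) ∈ Aᶜ}).toReal ≤ sC :=
    ENNReal.toReal_le_of_le_ofReal hC0 (hub Aᶜ)
  have hcover : (1 : ℝ) ≤ (μ {ω | (fun i : Fin (t + 1) => X (i : ℕ) ω) ∈ A}).toReal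
      + (μ {ω | (fun i : Fin (t + 1) => X (i : ℕ) ω) ∈ Aᶜ}).toReal := by
    have huniv : (Set.univ : Set Ω) ⊆ {ω | (fun i : Fin (t + 1) => X (i : ℕ) ω) ∈ A}
        ∪ {ω | (fun i : Fin (t + 1) => X (i : ℕ) ω) ∈ Aᶜ} := by
      intro ω _
      by_cases h : (fun i : Fin (t + 1) => X (i : ℕ) ω) ∈ A
      · exact Or.inl h
      · exact Or.inr (Finset.mem_compl.mpr h)
    have h1 : (1 : ENNReal) = μ Set.univ := (measure_univ).symm
    have h2 : μ Set.univ ≤ μ {ω | (fun i : Fin (t + 1) => X (i : ℕ) ω) ∈ A}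
        + μ {ω | (fun i : Fin (t + 1) => X (i : ℕ) ω) ∈ Aᶜ} :=
      le_trans (measure_mono huniv) (measure_union_le _ _)
    have h3 := ENNReal.toReal_mono (by
      exact ENNReal.add_ne_top.mpr ⟨measure_ne_top μ _, measure_ne_top μ _⟩) (h1 ▸ h2)
    rw [ENNReal.toReal_add (measure_ne_top μ _) (measure_ne_top μ _)] at h3
    simpa using h3
  linarith

end Meas

section Chain
set_option linter.unusedSectionVars false
variable {S : Type*} [Fintype S] [DecidableEq S]

/-- paths whose first visit to `j` is at the final time `m` -/
def FH (j : S) (m : ℕ) : Finset (Fin (m + 1) → S) :=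
  Finset.univ.filter (fun h => h (Fin.last m) = j ∧ ∀ i : Fin (m + 1), (i : ℕ) < m → h i ≠ j)

noncomputable def wmass (P : Matrix S S ℝ) (π : S → ℝ) (j : S) (m : ℕ) : ℝ :=
  ∑ h ∈ FH j m, Mw P π m h

lemma chainA (P : Matrix S S ℝ) (π : S → ℝ) (j : S)
    (hstat : Matrix.vecMul π P = π) (n : ℕ) :
    ∑ m ∈ Finset.range (n + 1), wmass P π j m * (P ^ (n - m)) j j = π j := by
  classical
  set s : Finset (Fin (n + 1) → S) := Finset.univ.filter (fun g => g (Fin.last n) = j) with hs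
  have hL2 : ∑ g ∈ s, Mw P π n g = π j := by
    rw [hs, Finset.sum_filter]
    exact marginal_sum hstat n j
  set fhf : (Fin (n + 1) → S) → ℕ :=
    fun g => sInf {i : ℕ | ∃ hi : i < n + 1, g ⟨i, hi⟩ = j} with hfhf
  have hmemlast : ∀ g ∈ s, n ∈ {i : ℕ | ∃ hi : i < n + 1, g ⟨i, hi⟩ = j} := by
    intro g hg
    rw [hs, Finset.mem_filter] at hg
    exact ⟨by omega, hg.2⟩
  have hmaps : ∀ g ∈ s, fhf g ∈ Finset.range (n + 1) := by
    intro g hg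
    have := Nat.sInf_le (hmemlast g hg)
    rw [Finset.mem_range]
    simp only [hfhf]
    omega
  have hfib := Finset.sum_fiberwise_of_maps_to hmaps (Mw P π n)
  rw [hL2] at hfib
  rw [← hfib]
  refine Finset.sum_congr rfl (fun m hm => ?_)
  rw [Finset.mem_range] at hm
  have hm' : m ≤ n := by omega
  have hfil : s.filter (fun g => fhf g = m)
      = Finset.univ.filter (fun g : Fin (n + 1) → S =>
          ((fun i : Fin (m + 1) => g (Fin.castLE (by omega) i)) ∈ FH j m)
          ∧ g (Fin.last n) = j) := by
    ext g
    simp only [hs, Finset.mem_filter, Finset.mem_univ, true_and, FH]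
    constructor
    · rintro ⟨hlast, hinf⟩
      have hne : {i : ℕ | ∃ hi : i < n + 1, g ⟨i, hi⟩ = j}.Nonempty :=
        ⟨n, by exact ⟨by omega, hlast⟩⟩
      have hmem := Nat.sInf_mem hne
      simp only [hfhf] at hinf
      rw [hinf] at hmem
      obtain ⟨hmlt, hgm⟩ := hmem
      refine ⟨⟨?_, ?_⟩, hlast⟩
      · exact (congrArg g (Fin.ext (by simp))).trans hgm
      · intro i hi hgi
        have : (i : ℕ) ∈ {i : ℕ | ∃ hi : i < n + 1, g ⟨i, hi⟩ = j} :=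
          ⟨by omega, by exact (congrArg g (Fin.ext (by simp))).symm.trans hgi⟩
        have := Nat.sInf_le this
        omega
    · rintro ⟨⟨hmj, hmin⟩, hlast⟩
      refine ⟨hlast, ?_⟩
      have hmmem : m ∈ {i : ℕ | ∃ hi : i < n + 1, g ⟨i, hi⟩ = j} :=
        ⟨by omega, (congrArg g (Fin.ext (by simp))).symm.trans hmj⟩
      have hle : sInf {i : ℕ | ∃ hi : i < n + 1, g ⟨i, hi⟩ = j} ≤ m := Nat.sInf_le hmmem
      simp only [hfhf]
      by_contra hne'
      have hlt : sInf {i : ℕ | ∃ hi : i < n + 1, g ⟨i, hi⟩ = j} < m := by omega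
      have hmem := Nat.sInf_mem (⟨m, hmmem⟩ :
        {i : ℕ | ∃ hi : i < n + 1, g ⟨i, hi⟩ = j}.Nonempty)
      obtain ⟨hilt, higj⟩ := hmem
      set I : ℕ := sInf {i : ℕ | ∃ hi : i < n + 1, g ⟨i, hi⟩ = j} with hI
      have hIm : I < m + 1 := by omega
      refine hmin ⟨I, hIm⟩ (by simpa using hlt) ?_
      refine Eq.trans (congrArg g (Fin.ext ?_)) higj
      rfl
  rw [hfil]
  rw [Finset.sum_filter]
  rw [ext_sum P π m n hm' (FH j m) j]
  rw [wmass, Finset.sum_mul]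
  refine Finset.sum_congr rfl (fun h hh => ?_)
  rw [FH, Finset.mem_filter] at hh
  rw [hh.2.1]
  ring

end Chain

section Avoid
set_option linter.unusedSectionVars false
variable {S : Type*} [Fintype S] [DecidableEq S]

def Av (j : S) (t : ℕ) : Finset (Fin (t + 1) → S) :=
  Finset.univ.filter (fun g => ∀ i, g i ≠ j)

noncomputable def amass (P : Matrix S S ℝ) (π : S → ℝ) (j : S) (t : ℕ) : ℝ :=
  ∑ g ∈ Av j t, Mw P π t g

lemma amass_decay (P : Matrix S S ℝ) (π : S → ℝ) (j : S)
    (hP0 : ∀ i k, 0 ≤ P i k) (hP1 : ∀ i, ∑ k, P i k = 1) (hπ0 : ∀ s, 0 ≤ π s)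
    (t0 t : ℕ) (ε : ℝ) (hε : ∀ w, ε ≤ (P ^ t0) w j) :
    amass P π j (t + t0) ≤ (1 - ε) * amass P π j t := by
  classical
  set B : Finset (Fin (t + t0 + 1) → S) := Finset.univ.filter
    (fun g => ((fun i : Fin (t + 1) => g (Fin.castLE (by omega) i)) ∈ Av j t)
      ∧ g (Fin.last (t + t0)) ≠ j) with hB
  have hsub : Av j (t + t0) ⊆ B := by
    intro g hg
    rw [Av, Finset.mem_filter] at hg
    rw [hB, Finset.mem_filter]
    exact ⟨Finset.mem_univ _, by
      rw [Av, Finset.mem_filter]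
      exact ⟨Finset.mem_univ _, fun i => hg.2 _⟩, hg.2 _⟩
  have h1 : amass P π j (t + t0) ≤ ∑ g ∈ B, Mw P π (t + t0) g := by
    rw [amass]
    exact Finset.sum_le_sum_of_subset_of_nonneg hsub
      (fun g _ _ => Mw_nonneg hP0 hπ0 _ g)
  have h2 : ∑ g ∈ B, Mw P π (t + t0) g
      = ∑ z ∈ Finset.univ.erase j, ∑ g : Fin (t + t0 + 1) → S,
        (if (fun i : Fin (t + 1) => g (Fin.castLE (by omega) i)) ∈ Av j t
            ∧ g (Fin.last (t + t0)) = z then Mw P π (t + t0) g else 0) := by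
    rw [hB, Finset.sum_filter, Finset.sum_comm]
    refine Finset.sum_congr rfl (fun g _ => ?_)
    by_cases hp : (fun i : Fin (t + 1) => g (Fin.castLE (by omega) i)) ∈ Av j t
    · simp only [hp, true_and]
      rw [Finset.sum_ite_eq (Finset.univ.erase j) (g (Fin.last (t + t0)))
        (fun _ => Mw P π (t + t0) g)]
      simp [Finset.mem_erase]
    · simp [hp]
  have h3 : ∀ z, (∑ g : Fin (t + t0 + 1) → S,
        if (fun i : Fin (t + 1) => g (Fin.castLE (by omega) i)) ∈ Av j t
            ∧ g (Fin.last (t + t0)) = z then Mw P π (t + t0) g else 0)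
      = ∑ h ∈ Av j t, (P ^ t0) (h (Fin.last t)) z * Mw P π t h := by
    intro z
    have := ext_sum P π t (t + t0) (by omega) (Av j t) z
    rw [Nat.add_sub_cancel_left] at this
    exact this
  have h4 : ∑ z ∈ Finset.univ.erase j, ∑ h ∈ Av j t, (P ^ t0) (h (Fin.last t)) z * Mw P π t h
      = ∑ h ∈ Av j t, (1 - (P ^ t0) (h (Fin.last t)) j) * Mw P π t h := by
    rw [Finset.sum_comm]
    refine Finset.sum_congr rfl (fun h _ => ?_)
    rw [← Finset.sum_mul]
    congr 1
    have := Finset.add_sum_erase Finset.univ (fun z => (P ^ t0) (h (Fin.last t)) z)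
      (Finset.mem_univ j)
    have hrow := pow_row_sum hP1 t0 (h (Fin.last t))
    rw [hrow] at this
    linarith
  have h5 : ∑ h ∈ Av j t, (1 - (P ^ t0) (h (Fin.last t)) j) * Mw P π t h
      ≤ (1 - ε) * amass P π j t := by
    rw [amass, Finset.mul_sum]
    refine Finset.sum_le_sum (fun h _ => ?_)
    exact mul_le_mul_of_nonneg_right (by linarith [hε (h (Fin.last t))])
      (Mw_nonneg hP0 hπ0 _ _)
  calc amass P π j (t + t0) ≤ ∑ g ∈ B, Mw P π (t + t0) g := h1
    _ = _ := h2
    _ = _ := Finset.sum_congr rfl (fun z _ => h3 z)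
    _ = _ := h4
    _ ≤ _ := h5

end Avoid

section Never
set_option linter.unusedSectionVars false
variable {S : Type*} [Fintype S] [DecidableEq S] [Nonempty S]
variable {Ω : Type*} [MeasurableSpace Ω] (μ : Measure Ω) [IsProbabilityMeasure μ]
variable (X : ℕ → Ω → S) (P : Matrix S S ℝ) (π : S → ℝ) (j : S)

lemma never_hit_zero (hP0 : ∀ i k, 0 ≤ P i k) (hP1 : ∀ i, ∑ k, P i k = 1)
    (herg : ∃ t, ∀ i k, 0 < (P ^ t) i k)
    (hπ0 : ∀ s, 0 ≤ π s) (hπsum : ∑ s, π s = 1) (hstat : Matrix.vecMul π P = π)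
    (hchain : IsMarkovChain μ X (fun a b => P a b))
    (hinit : ∀ s, (μ {ω | X 0 ω = s}).toReal = π s) :
    μ {ω | ∀ t, X t ω ≠ j} = 0 := by
  classical
  obtain ⟨t0, ht0⟩ := herg
  set ε : ℝ := Finset.univ.inf' Finset.univ_nonempty (fun w => (P ^ t0) w j) with hε
  have hεle : ∀ w, ε ≤ (P ^ t0) w j := fun w => Finset.inf'_le _ (Finset.mem_univ w)
  have hεpos : 0 < ε := by
    rw [hε, Finset.lt_inf'_iff]
    exact fun w _ => ht0 w j
  have hε1 : ε ≤ 1 := by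
    have h1 : (P ^ t0) j j ≤ ∑ k, (P ^ t0) j k :=
      Finset.single_le_sum (fun k _ => pow_entry_nonneg hP0 t0 j k) (Finset.mem_univ j)
    have := hεle j
    rw [pow_row_sum hP1 t0 j] at h1
    linarith
  have hbound : ∀ k : ℕ, amass P π j (k * t0) ≤ (1 - ε) ^ k := by
    intro k
    induction k with
    | zero =>
      simp only [Nat.zero_mul, pow_zero]
      calc amass P π j 0 ≤ ∑ g : Fin 1 → S, Mw P π 0 g := by
            rw [amass]
            exact Finset.sum_le_sum_of_subset_of_nonneg (Finset.filter_subset _ _)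
              (fun g _ _ => Mw_nonneg hP0 hπ0 _ g)
        _ = 1 := total_sum hstat hπsum 0
    | succ k ih =>
      have hmul : (k + 1) * t0 = k * t0 + t0 := by ring
      rw [hmul]
      calc amass P π j (k * t0 + t0) ≤ (1 - ε) * amass P π j (k * t0) :=
            amass_decay P π j hP0 hP1 hπ0 t0 (k * t0) ε hεle
        _ ≤ (1 - ε) * (1 - ε) ^ k := by
            apply mul_le_mul_of_nonneg_left ih
            linarith
        _ = (1 - ε) ^ (k + 1) := by ring
  have hsub : ∀ T : ℕ, {ω | ∀ t, X t ω ≠ j}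
      ⊆ {ω | (fun i : Fin (T + 1) => X (i : ℕ) ω) ∈ Av j T} := by
    intro T ω hω
    simp only [Set.mem_setOf_eq, Av, Finset.mem_filter, Finset.mem_univ, true_and]
    exact fun i => hω _
  have hmeasle : ∀ k : ℕ, (μ {ω | ∀ t, X t ω ≠ j}).toReal ≤ (1 - ε) ^ k := by
    intro k
    have h1 : (μ {ω | ∀ t, X t ω ≠ j}).toReal
        ≤ (μ {ω | (fun i : Fin (k * t0 + 1) => X (i : ℕ) ω) ∈ Av j (k * t0)}).toReal :=
      ENNReal.toReal_mono (measure_ne_top μ _) (measure_mono (hsub (k * t0)))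
    rw [meas_event μ X P π hP0 hπ0 hstat hπsum hchain hinit (k * t0) (Av j (k * t0))] at h1
    exact h1.trans (hbound k)
  have hzero : (μ {ω | ∀ t, X t ω ≠ j}).toReal ≤ 0 := by
    refine ge_of_tendsto' (tendsto_pow_atTop_nhds_zero_of_lt_one (by linarith) (by linarith))
      (fun k => hmeasle k)
  have := le_antisymm hzero ENNReal.toReal_nonneg
  rcases (ENNReal.toReal_eq_zero_iff _).mp this with h | h
  · exact h
  · exact absurd h (measure_ne_top μ _)

end Never

section Wev
set_option linter.unusedSectionVars false
variable {S : Type*} [Fintype S] [DecidableEq S] [Nonempty S]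
variable {Ω : Type*} [MeasurableSpace Ω] (μ : Measure Ω) [IsProbabilityMeasure μ]
variable (X : ℕ → Ω → S) (P : Matrix S S ℝ) (π : S → ℝ) (j : S)

lemma W_meas_succ (hP0 : ∀ i k, 0 ≤ P i k) (hπ0 : ∀ s, 0 ≤ π s)
    (hstat : Matrix.vecMul π P = π) (hπsum : ∑ s, π s = 1)
    (hchain : IsMarkovChain μ X (fun a b => P a b))
    (hinit : ∀ s, (μ {ω | X 0 ω = s}).toReal = π s)
    (W : Ω → ℕ) (hW : ∀ ω, W ω = sInf {t : ℕ | X t ω = j}) (m : ℕ) :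
    (μ {ω | W ω = m + 1}).toReal = wmass P π j (m + 1) := by
  have hev : {ω | W ω = m + 1}
      = {ω | (fun i : Fin (m + 2) => X (i : ℕ) ω) ∈ FH j (m + 1)} := by
    ext ω
    simp only [Set.mem_setOf_eq, FH, Finset.mem_filter, Finset.mem_univ, true_and, hW ω]
    constructor
    · intro hinf
      have hne : {t : ℕ | X t ω = j}.Nonempty := by
        rcases Set.eq_empty_or_nonempty {t : ℕ | X t ω = j} with he | hne
        · rw [he, Nat.sInf_empty] at hinf; omega
        · exact hne
      have hmem := Nat.sInf_mem hne
      rw [hinf] at hmem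
      constructor
      · simpa using hmem
      · intro i hi
        have : (i : ℕ) ∉ {t : ℕ | X t ω = j} := by
          apply Nat.notMem_of_lt_sInf
          omega
        simpa using this
    · rintro ⟨hj, hlt⟩
      have hmem : m + 1 ∈ {t : ℕ | X t ω = j} := by simpa using hj
      have hle := Nat.sInf_le hmem
      have hmem2 := Nat.sInf_mem (⟨m + 1, hmem⟩ : {t : ℕ | X t ω = j}.Nonempty)
      by_contra hne'
      have hlt2 : sInf {t : ℕ | X t ω = j} < m + 1 := by omega
      exact hlt ⟨sInf {t : ℕ | X t ω = j}, by omega⟩ (by simpa using hlt2) hmem2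
  rw [hev]
  exact meas_event μ X P π hP0 hπ0 hstat hπsum hchain hinit (m + 1) (FH j (m + 1))

lemma W_meas_zero (hP0 : ∀ i k, 0 ≤ P i k) (hP1 : ∀ i, ∑ k, P i k = 1)
    (herg : ∃ t, ∀ i k, 0 < (P ^ t) i k)
    (hπ0 : ∀ s, 0 ≤ π s) (hπsum : ∑ s, π s = 1) (hstat : Matrix.vecMul π P = π)
    (hchain : IsMarkovChain μ X (fun a b => P a b))
    (hinit : ∀ s, (μ {ω | X 0 ω = s}).toReal = π s)
    (W : Ω → ℕ) (hW : ∀ ω, W ω = sInf {t : ℕ | X t ω = j}) :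
    (μ {ω | W ω = 0}).toReal = π j := by
  have hnev := never_hit_zero μ X P π j hP0 hP1 herg hπ0 hπsum hstat hchain hinit
  have hsub1 : {ω | W ω = 0} ⊆ {ω | X 0 ω = j} ∪ {ω | ∀ t, X t ω ≠ j} := by
    intro ω hω
    simp only [Set.mem_setOf_eq, hW ω] at hω
    rcases (Nat.sInf_eq_zero.mp hω) with h | h
    · exact Or.inl h
    · right
      intro t ht
      have : t ∈ {t : ℕ | X t ω = j} := ht
      rw [h] at this
      exact this
  have hsub2 : {ω | X 0 ω = j} ⊆ {ω | W ω = 0} := by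
    intro ω hω
    simp only [Set.mem_setOf_eq, hW ω]
    exact Nat.sInf_eq_zero.mpr (Or.inl hω)
  have h1 : μ {ω | W ω = 0} ≤ μ {ω | X 0 ω = j} := by
    calc μ {ω | W ω = 0} ≤ μ ({ω | X 0 ω = j} ∪ {ω | ∀ t, X t ω ≠ j}) := measure_mono hsub1
      _ ≤ μ {ω | X 0 ω = j} + μ {ω | ∀ t, X t ω ≠ j} := measure_union_le _ _
      _ = μ {ω | X 0 ω = j} := by rw [hnev, add_zero]
  have h2 : μ {ω | X 0 ω = j} ≤ μ {ω | W ω = 0} := measure_mono hsub2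
  rw [le_antisymm h1 h2]
  exact hinit j

lemma wmass_zero : wmass P π j 0 = π j := by
  rw [wmass, FH]
  have : (Finset.univ.filter (fun h : Fin 1 → S =>
      h (Fin.last 0) = j ∧ ∀ i : Fin 1, (i : ℕ) < 0 → h i ≠ j)) = {fun _ => j} := by
    ext h
    simp only [Finset.mem_filter, Finset.mem_univ, true_and, Finset.mem_singleton]
    constructor
    · rintro ⟨h1, _⟩
      funext i
      have : i = Fin.last 0 := Subsingleton.elim _ _
      rw [this, h1]
    · intro h1
      subst h1
      exact ⟨rfl, fun i hi => absurd hi (by omega)⟩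
  rw [this, Finset.sum_singleton]
  rfl

end Wev

section Algebra

variable {f : ℕ → ℝ} {p : ℝ}

lemma conv_zero (hf0 : f 0 = 0) : ∀ k n, n < k → convPow f k n = 0 := by
  intro k
  induction k with
  | zero => intro n hn; omega
  | succ k ih =>
    intro n hn
    rw [convPow]
    refine Finset.sum_eq_zero (fun i hi => ?_)
    rw [Finset.mem_range] at hi
    rcases Nat.eq_zero_or_pos i with h | h
    · rw [h, hf0, zero_mul]
    · rw [ih (n - i) (by omega), mul_zero]

lemma gg_eq (hf0 : f 0 = 0) (n : ℕ) :
    geomSumPMF p f n = ∑ k ∈ Finset.range (n + 1), p * (1 - p) ^ k * convPow f k n := by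
  rw [geomSumPMF]
  refine tsum_eq_sum (fun k hk => ?_)
  rw [Finset.mem_range] at hk
  rw [conv_zero hf0 k n (by omega), mul_zero]

lemma claim1 (hf0 : f 0 = 0) (c : ℕ) :
    geomSumPMF p f c - (1 - p) * ∑ i ∈ Finset.range (c + 1), f i * geomSumPMF p f (c - i)
      = if c = 0 then p else 0 := by
  have hconv : ∑ i ∈ Finset.range (c + 1), f i * geomSumPMF p f (c - i)
      = ∑ k ∈ Finset.range (c + 1), p * (1 - p) ^ k * convPow f (k + 1) c := by
    have h1 : ∀ i ∈ Finset.range (c + 1), f i * geomSumPMF p f (c - i)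
        = ∑ k ∈ Finset.range (c + 1), p * (1 - p) ^ k * (f i * convPow f k (c - i)) := by
      intro i hi
      rw [Finset.mem_range] at hi
      rw [gg_eq hf0]
      have hext : ∑ k ∈ Finset.range (c - i + 1), p * (1 - p) ^ k * convPow f k (c - i)
          = ∑ k ∈ Finset.range (c + 1), p * (1 - p) ^ k * convPow f k (c - i) := by
        refine Finset.sum_subset (by
          exact Finset.range_mono (by omega)) (fun k hk hnk => ?_)
        rw [Finset.mem_range] at hk hnk
        rw [conv_zero hf0 k (c - i) (by omega), mul_zero]
      rw [hext, Finset.mul_sum]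
      refine Finset.sum_congr rfl (fun k _ => by ring)
    rw [Finset.sum_congr rfl h1, Finset.sum_comm]
    refine Finset.sum_congr rfl (fun k _ => ?_)
    rw [← Finset.mul_sum]
    congr 1
  rw [gg_eq hf0, hconv, Finset.mul_sum]
  have hstep : ∀ k, (1 - p) * (p * (1 - p) ^ k * convPow f (k + 1) c)
      = p * (1 - p) ^ (k + 1) * convPow f (k + 1) c := fun k => by ring
  rw [Finset.sum_congr rfl (fun k _ => hstep k), ← Finset.sum_sub_distrib]
  rw [Finset.sum_range_sub' (fun k => p * (1 - p) ^ k * convPow f k c) (c + 1)]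
  rw [conv_zero hf0 (c + 1) c (by omega)]
  show p * (1-p)^0 * (if c = 0 then 1 else 0) - p * (1-p)^(c+1) * 0 = _
  split <;> ring

end Algebra

section Algebra2

lemma sumf {q : ℕ → ℝ} (hq0 : q 0 = 1) (m : ℕ) :
    ∑ i ∈ Finset.range (m + 1), tailToPMF q i = 1 - q m := by
  induction m with
  | zero => simp [tailToPMF, hq0]
  | succ m ih =>
    rw [Finset.sum_range_succ, ih]
    show 1 - q m + (q m - q (m + 1)) = _
    ring

lemma f0 {q : ℕ → ℝ} (hq0 : q 0 = 1) : tailToPMF q 0 = 0 := by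
  simp [tailToPMF, hq0]

lemma thmB {p : ℝ} (hp : (1 : ℝ) - p ≠ 0) (u : ℕ → ℝ) (hu0 : u 0 = 1) :
    ∀ n, ∑ m ∈ Finset.range (n + 1),
      geomSumPMF p (tailToPMF (fun t => (u t - p) / (1 - p))) m * u (n - m) = p := by
  set q : ℕ → ℝ := fun t => (u t - p) / (1 - p) with hq
  set f : ℕ → ℝ := tailToPMF q with hf
  have hq0 : q 0 = 1 := by rw [hq]; simp [hu0]; exact hp
  have hf0 : f 0 = 0 := f0 hq0
  set gg : ℕ → ℝ := geomSumPMF p f with hgg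
  have hgg0 : gg 0 = p := by
    have := claim1 (p := p) hf0 0
    simp only [if_pos rfl] at this
    rw [Finset.sum_range_one, hf0, zero_mul, mul_zero, sub_zero] at this
    exact this
  have husum : ∀ m, u m = 1 - (1 - p) * ∑ i ∈ Finset.range (m + 1), f i := by
    intro m
    rw [hf, sumf hq0]
    have h1 : (1 - p) * q m = u m - p := by
      rw [hq]
      exact mul_div_cancel₀ _ hp
    have h2 : (1 - p) * (1 - q m) = (1 - p) - (1 - p) * q m := by ring
    rw [h2, h1]
    ring
  intro n
  induction n with
  | zero => simp [hgg0, hu0]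
  | succ n ih =>
    rw [Finset.sum_range_succ]
    have hu'' : ∀ m ∈ Finset.range (n + 1), gg m * u (n + 1 - m)
        = gg m * u (n - m) - (1 - p) * (f (n + 1 - m) * gg m) := by
      intro m hm
      rw [Finset.mem_range] at hm
      have h1 := husum (n + 1 - m)
      have h2 := husum (n - m)
      have h3 : n + 1 - m = (n - m) + 1 := by omega
      rw [h3, Finset.sum_range_succ, mul_add] at h1
      rw [h3]
      have h4 : u (n - m + 1) = u (n - m) - (1 - p) * f (n - m + 1) := by linarith
      rw [h4]
      ring
    rw [Finset.sum_congr rfl hu'', Finset.sum_sub_distrib, ih]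
    have hkey : gg (n + 1) = (1 - p) * ∑ m ∈ Finset.range (n + 1), f (n + 1 - m) * gg m := by
      have hc := claim1 (p := p) hf0 (n + 1)
      rw [if_neg (by omega)] at hc
      have hrefl := Finset.sum_range_reflect (fun i => f i * gg (n + 1 - i)) (n + 2)
      have hrefl2 : ∑ j ∈ Finset.range (n + 2), f (n + 2 - 1 - j) * gg (n + 1 - (n + 2 - 1 - j))
          = ∑ j ∈ Finset.range (n + 2), f (n + 1 - j) * gg j := by
        refine Finset.sum_congr rfl (fun i hi => ?_)
        rw [Finset.mem_range] at hi
        have e1 : n + 2 - 1 - i = n + 1 - i := by omega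
        have e2 : n + 1 - (n + 1 - i) = i := by omega
        rw [e1, e2]
      rw [hrefl2] at hrefl
      rw [← hrefl] at hc
      rw [Finset.sum_range_succ, Nat.sub_self, hf0] at hc
      have h6 : ∑ j ∈ Finset.range (n + 1), f (n + 1 - j) * gg j + 0 * gg (n + 1)
          = ∑ j ∈ Finset.range (n + 1), f (n + 1 - j) * gg j := by ring
      rw [h6] at hc
      linarith
    rw [Nat.sub_self, hu0]
    rw [Finset.mul_sum] at hkey
    linarith

lemma uniqB {p : ℝ} (u : ℕ → ℝ) (hu0 : u 0 = 1) (x y : ℕ → ℝ)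
    (hx : ∀ n, ∑ m ∈ Finset.range (n + 1), x m * u (n - m) = p)
    (hy : ∀ n, ∑ m ∈ Finset.range (n + 1), y m * u (n - m) = p) :
    ∀ n, x n = y n := by
  intro n
  induction n using Nat.strong_induction_on with
  | _ n ih =>
    have hx' := hx n
    have hy' := hy n
    rw [Finset.sum_range_succ, Nat.sub_self, hu0, mul_one] at hx' hy'
    have hsum : ∑ m ∈ Finset.range n, x m * u (n - m)
        = ∑ m ∈ Finset.range n, y m * u (n - m) :=
      Finset.sum_congr rfl (fun m hm => by rw [ih m (Finset.mem_range.mp hm)])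
    linarith

end Algebra2

/-- if `X₀ ~ π`, `j` satisfies `π_y ℙ(X_t = j) ≤ π_j ℙ(X_t = y)` for all
`t, y` when `X₀ ~ π^{(j)}`, and `T^{(j)}` has tail `(P^t(j,j) - π_j)/(1-π_j)`, then the
hitting time `W_j` is distributed as the sum of `N ~ Geom(π_j)` IID copies of `T^{(j)}`. -/
theorem hitting_eq_geom_sum {S : Type*} [Fintype S] [DecidableEq S] [Nonempty S]
    {Ω : Type*} [MeasurableSpace Ω] (μ : Measure Ω) [IsProbabilityMeasure μ]
    (X : ℕ → Ω → S)
    (P : Matrix S S ℝ) (π : S → ℝ) (j : S)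
    (hP0 : ∀ i k, 0 ≤ P i k) (hP1 : ∀ i, ∑ k, P i k = 1)
    (hirr : ∀ i k, ∃ t, 0 < (P ^ t) i k)
    (herg : ∃ t, ∀ i k, 0 < (P ^ t) i k)
    (hπpos : ∀ s, 0 < π s) (hπsum : ∑ s, π s = 1)
    (hstat : Matrix.vecMul π P = π) (hπj : π j < 1)
    (hchain : IsMarkovChain μ (fun t => X t) (fun a b => P a b))
    (hinit : ∀ s, (μ {ω | X 0 ω = s}).toReal = π s)
    -- the condition on `j`, for the chain started from `π^{(j)}`, stated via the
    -- time-`t` distribution `π^{(j)} P^t`: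
    (hineq : ∀ (t : ℕ) (y : S),
      π y * Matrix.vecMul
          (fun s => (π s - if s = j then π j else 0) / (1 - π j)) (P ^ t) j
        ≤ π j * Matrix.vecMul
          (fun s => (π s - if s = j then π j else 0) / (1 - π j)) (P ^ t) y)
    (W : Ω → ℕ) (hW : ∀ ω, W ω = sInf {t : ℕ | X t ω = j}) :
    ∀ n : ℕ, (μ {ω | W ω = n}).toReal
      = geomSumPMF (π j)
          (tailToPMF (fun t => ((P ^ t) j j - π j) / (1 - π j))) n := by
  intro n
  have hπ0 : ∀ s, 0 ≤ π s := fun s => (hπpos s).le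
  have hp : (1 : ℝ) - π j ≠ 0 := ne_of_gt (by linarith)
  have hu0 : (fun r : ℕ => (P ^ r) j j) 0 = 1 := by
    simp [Matrix.one_apply_eq]
  have hchain' : IsMarkovChain μ X (fun a b => P a b) := hchain
  have hWm : ∀ m, (μ {ω | W ω = m}).toReal = wmass P π j m := by
    intro m
    cases m with
    | zero =>
      rw [W_meas_zero μ X P π j hP0 hP1 herg hπ0 hπsum hstat hchain' hinit W hW]
      exact (wmass_zero P π j).symm
    | succ m =>
      exact W_meas_succ μ X P π j hP0 hπ0 hstat hπsum hchain' hinit W hW m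
  have hA : ∀ n, ∑ m ∈ Finset.range (n + 1),
      wmass P π j m * (fun r : ℕ => (P ^ r) j j) (n - m) = π j := fun n =>
    chainA P π j hstat n
  have hB := thmB (p := π j) hp (fun r : ℕ => (P ^ r) j j) hu0
  have huniq := uniqB (p := π j) (fun r : ℕ => (P ^ r) j j) hu0
    (wmass P π j)
    (geomSumPMF (π j) (tailToPMF (fun t => ((fun r : ℕ => (P ^ r) j j) t - π j) / (1 - π j))))
    hA hB
  rw [hWm n, huniq n]
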